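/- Let u, v, w be words over {a,b} of the same content such that u ∼_2 v where u = u' xy u'' and v = u' yx u'' differ by a single adjacent swap of distinct letters x ≠ y. Then neither of the two lattice points of ℕ² at which the paths of u and v differ is a vertex of the corresponding height polygon: writing α^u and α^v for the a-heights, there is exactly one index i with α^u_i ≠ α^v_i, |α^u_i - α^v_i| = 1, and neither (i, α^u_i) nor (i, α^v_i) is a vertex of conv(γ^{u,a}) = conv(γ^{v,a}); moreover 0 < i < ℓ_a - 1. -/

import Mathlib

/-- The letter `a` of the two-letter alphabet, encoded as `true`. -/
def ltrA : Bool := true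

/-- The letter `b` of the two-letter alphabet, encoded as `false`. -/
def ltrB : Bool := false

/-- `alphaH w i` is the number of `b`'s occurring before the `(i+1)`-th `a` in `w`. -/
def alphaH : List Bool → ℕ → ℕ
  | [], _ => 0
  | (x :: rest), i =>
      if x = ltrA then (if i = 0 then 0 else alphaH rest (i - 1))
      else alphaH rest i + 1

/-- `betaH w i` is the number of `a`'s occurring before the `(i+1)`-th `b` in `w`. -/
def betaH (w : List Bool) (i : ℕ) : ℕ := alphaH (w.map (!·)) i

/-- The `a`-height `γ^{w,a} = {(i, α^w_i) : 0 ≤ i < ℓ_a}`, as a subset of `ℝ²`. -/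
def gammaA (w : List Bool) : Set (ℝ × ℝ) :=
  {p | ∃ i, i < w.count ltrA ∧ p = ((i : ℝ), (alphaH w i : ℝ))}

/-- The `b`-height `γ^{w,b} = {(β^w_i, i) : 0 ≤ i < ℓ_b}`, as a subset of `ℝ²`. -/
def gammaB (w : List Bool) : Set (ℝ × ℝ) :=
  {p | ∃ i, i < w.count ltrB ∧ p = ((betaH w i : ℝ), (i : ℝ))}

lemma alphaH_append_lt (t : List Bool) : ∀ (u : List Bool) (k : ℕ), k < u.count true →
    alphaH (u ++ t) k = alphaH u k := by
  intro u
  induction u with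
  | nil => simp
  | cons z r ih =>
    intro k hk
    cases z with
    | true =>
      simp only [List.count_cons, beq_self_eq_true, if_pos rfl] at hk
      rcases Nat.eq_zero_or_pos k with h0 | h0
      · simp [alphaH, ltrA, h0]
      · have hk0 : k ≠ 0 := by omega
        simp only [List.cons_append, alphaH, ltrA, if_pos rfl, if_neg hk0]
        apply ih
        simp at hk
        omega
    | false =>
      simp only [List.count_cons] at hk
      simp only [List.cons_append, alphaH, ltrA]
      norm_num
      apply ih
      simp at hk
      omega

lemma alphaH_append_ge (t : List Bool) : ∀ (u : List Bool) (k : ℕ), u.count true ≤ k →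
    alphaH (u ++ t) k = u.count false + alphaH t (k - u.count true) := by
  intro u
  induction u with
  | nil => simp
  | cons z r ih =>
    intro k hk
    cases z with
    | true =>
      simp only [List.count_cons, beq_self_eq_true, if_pos rfl] at hk
      simp at hk
      have hk1 : k ≠ 0 := by omega
      have e1 : alphaH ((true :: r) ++ t) k = alphaH (r ++ t) (k-1) := by
        simp [alphaH, ltrA, hk1]
      rw [e1, ih (k-1) (by omega)]
      have c1 : List.count false (true::r) = List.count false r := by simp
      have c2 : List.count true (true::r) = List.count true r + 1 := by simp
      rw [c1, c2]
      congr 2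
      omega
    | false =>
      simp only [List.cons_append, alphaH, ltrA]
      norm_num
      simp [List.count_cons] at hk ⊢
      rw [ih k hk]
      omega

lemma alphaH_tf (u'' : List Bool) : alphaH (true :: false :: u'') 0 = 0 := by
  simp [alphaH, ltrA]

lemma alphaH_ft (u'' : List Bool) : alphaH (false :: true :: u'') 0 = 1 := by
  simp [alphaH, ltrA]

lemma alphaH_tf_ft (u'' : List Bool) (m : ℕ) (hm : m ≠ 0) :
    alphaH (true :: false :: u'') m = alphaH (false :: true :: u'') m := by
  simp [alphaH, ltrA, hm]

lemma halfplane_convex (a b c : ℝ) : Convex ℝ {z : ℝ × ℝ | c ≤ a * z.1 + b * z.2} := by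
  apply convex_halfSpace_ge (f := fun z : ℝ × ℝ => a * z.1 + b * z.2)
  constructor
  · intro z w; simp [Prod.fst_add, Prod.snd_add]; ring
  · intro t z; simp [Prod.smul_fst, Prod.smul_snd, smul_eq_mul]; ring

lemma main (u' u'' : List Bool)
    (hA : convexHull ℝ (gammaA (u' ++ [true, false] ++ u'')) =
      convexHull ℝ (gammaA (u' ++ [false, true] ++ u''))) :
    ∃ i : ℕ, i < (u' ++ [true, false] ++ u'').count ltrA ∧ 0 < i ∧
      i < (u' ++ [true, false] ++ u'').count ltrA - 1 ∧
      (∀ k < (u' ++ [true, false] ++ u'').count ltrA, k ≠ i →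
        alphaH (u' ++ [true, false] ++ u'') k = alphaH (u' ++ [false, true] ++ u'') k) ∧
      alphaH (u' ++ [true, false] ++ u'') i ≠ alphaH (u' ++ [false, true] ++ u'') i ∧
      (alphaH (u' ++ [true, false] ++ u'') i = alphaH (u' ++ [false, true] ++ u'') i + 1 ∨
        alphaH (u' ++ [false, true] ++ u'') i = alphaH (u' ++ [true, false] ++ u'') i + 1) ∧
      ((i : ℝ), (alphaH (u' ++ [true, false] ++ u'') i : ℝ)) ∉
        (convexHull ℝ (gammaA (u' ++ [true, false] ++ u''))).extremePoints ℝ ∧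
      ((i : ℝ), (alphaH (u' ++ [false, true] ++ u'') i : ℝ)) ∉
        (convexHull ℝ (gammaA (u' ++ [true, false] ++ u''))).extremePoints ℝ := by
  have assoc1 : u' ++ [true, false] ++ u'' = u' ++ (true :: false :: u'') := by
    simp [List.append_assoc]
  have assoc2 : u' ++ [false, true] ++ u'' = u' ++ (false :: true :: u'') := by
    simp [List.append_assoc]
  set p := u'.count true with hp_def
  set cf := u'.count false with hcf_def
  set q := u''.count true with hq_def
  -- counts
  have hcount1 : (u' ++ [true, false] ++ u'').count ltrA = p + 1 + q := by
    simp [ltrA, List.count_append, List.count_cons]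
    omega
  have hcount2 : (u' ++ [false, true] ++ u'').count ltrA = p + 1 + q := by
    simp [ltrA, List.count_append, List.count_cons]
    omega
  -- values at p
  have hv1 : alphaH (u' ++ [true, false] ++ u'') p = cf := by
    rw [assoc1, alphaH_append_ge _ _ _ le_rfl]
    simp [alphaH_tf, hcf_def]
  have hv2 : alphaH (u' ++ [false, true] ++ u'') p = cf + 1 := by
    rw [assoc2, alphaH_append_ge _ _ _ le_rfl]
    simp [alphaH_ft, hcf_def]
  -- equality away from p
  have heq : ∀ k, k ≠ p → alphaH (u' ++ [true, false] ++ u'') k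
      = alphaH (u' ++ [false, true] ++ u'') k := by
    intro k hk
    rcases lt_or_gt_of_ne hk with h | h
    · rw [assoc1, assoc2, alphaH_append_lt _ _ _ h, alphaH_append_lt _ _ _ h]
    · rw [assoc1, assoc2, alphaH_append_ge _ _ _ (le_of_lt h),
        alphaH_append_ge _ _ _ (le_of_lt h), alphaH_tf_ft u'' (k - p) (by omega)]
  -- membership of the low point
  have hmem : ((p : ℝ), (cf : ℝ)) ∈ convexHull ℝ (gammaA (u' ++ [false, true] ++ u'')) := by
    rw [← hA]
    apply subset_convexHull
    exact ⟨p, by omega, by rw [hv1]⟩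
  -- p > 0
  have hp : 0 < p := by
    by_contra hp0
    have hp0 : p = 0 := by omega
    have hsub : gammaA (u' ++ [false, true] ++ u'') ⊆
        {z : ℝ × ℝ | ((cf : ℝ) + 1) ≤ ((cf : ℝ) + 1) * z.1 + 1 * z.2} := by
      rintro _ ⟨k, hk, rfl⟩
      by_cases hk0 : k = 0
      · subst hk0
        have e0 : alphaH (u' ++ [false, true] ++ u'') 0 = cf + 1 := by rw [← hp0]; exact hv2
        simp only [Set.mem_setOf_eq]
        rw [e0]
        push_cast
        norm_num
      · have h1 : (1 : ℝ) ≤ (k : ℝ) := by exact_mod_cast Nat.one_le_iff_ne_zero.mpr hk0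
        have h2 : (0 : ℝ) ≤ (alphaH (u' ++ [false, true] ++ u'') k : ℝ) := by positivity
        have h3 : (0 : ℝ) ≤ (cf : ℝ) := by positivity
        simp only [Set.mem_setOf_eq]
        nlinarith
    have := convexHull_min hsub (halfplane_convex _ _ _) hmem
    simp only [Set.mem_setOf_eq, hp0] at this
    push_cast at this
    linarith
  -- q > 0
  have hq : 0 < q := by
    by_contra hq0
    have hq0 : q = 0 := by omega
    have hsub : gammaA (u' ++ [false, true] ++ u'') ⊆
        {z : ℝ × ℝ | ((cf : ℝ) + 1) - ((cf : ℝ) + 1) * (p : ℝ)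
          ≤ (-((cf : ℝ) + 1)) * z.1 + 1 * z.2} := by
      rintro _ ⟨k, hk, rfl⟩
      rw [hcount2, hq0] at hk
      by_cases hkp : k = p
      · subst hkp
        rw [hv2]
        simp only [Set.mem_setOf_eq]
        push_cast
        ring_nf
        linarith
      · have hklt : k < p := by omega
        have h1 : (k : ℝ) + 1 ≤ (p : ℝ) := by exact_mod_cast hklt
        have h2 : (0 : ℝ) ≤ (alphaH (u' ++ [false, true] ++ u'') k : ℝ) := by positivity
        have h3 : (0 : ℝ) ≤ (cf : ℝ) := by positivity
        simp only [Set.mem_setOf_eq]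
        nlinarith
    have := convexHull_min hsub (halfplane_convex _ _ _) hmem
    simp only [Set.mem_setOf_eq] at this
    nlinarith
  -- non-extremeness
  have hne1 : ((p : ℝ), (cf : ℝ)) ∉
      (convexHull ℝ (gammaA (u' ++ [true, false] ++ u''))).extremePoints ℝ := by
    intro h
    rw [hA] at h
    obtain ⟨k, hk, hpt⟩ := extremePoints_convexHull_subset h
    have h1 : (p : ℝ) = (k : ℝ) := congrArg Prod.fst hpt
    have hkp : k = p := by exact_mod_cast h1.symm
    subst hkp
    have h2 : (cf : ℝ) = (alphaH (u' ++ [false, true] ++ u'') p : ℝ) := congrArg Prod.snd hpt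
    rw [hv2] at h2
    exact_mod_cast absurd h2 (by push_cast; linarith)
  have hne2 : ((p : ℝ), ((cf : ℝ) + 1)) ∉
      (convexHull ℝ (gammaA (u' ++ [true, false] ++ u''))).extremePoints ℝ := by
    intro h
    obtain ⟨k, hk, hpt⟩ := extremePoints_convexHull_subset h
    have h1 : (p : ℝ) = (k : ℝ) := congrArg Prod.fst hpt
    have hkp : k = p := by exact_mod_cast h1.symm
    subst hkp
    have h2 : ((cf : ℝ) + 1) = (alphaH (u' ++ [true, false] ++ u'') p : ℝ) := congrArg Prod.snd hpt
    rw [hv1] at h2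
    exact_mod_cast absurd h2 (by push_cast; linarith)
  refine ⟨p, by omega, hp, by omega, fun k _ hk => heq k hk, by rw [hv1, hv2]; omega,
    Or.inr (by rw [hv1, hv2]), by rw [hv1]; exact hne1, by rw [hv2]; push_cast; exact hne2⟩

theorem swap_not_vertex' (u' u'' : List Bool) (x y : Bool) (hxy : x ≠ y)
    (hA : convexHull ℝ (gammaA (u' ++ [x, y] ++ u'')) =
      convexHull ℝ (gammaA (u' ++ [y, x] ++ u'')))
    :
    ∃ i : ℕ, i < (u' ++ [x, y] ++ u'').count ltrA ∧ 0 < i ∧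
      i < (u' ++ [x, y] ++ u'').count ltrA - 1 ∧
      (∀ k < (u' ++ [x, y] ++ u'').count ltrA, k ≠ i →
        alphaH (u' ++ [x, y] ++ u'') k = alphaH (u' ++ [y, x] ++ u'') k) ∧
      alphaH (u' ++ [x, y] ++ u'') i ≠ alphaH (u' ++ [y, x] ++ u'') i ∧
      (alphaH (u' ++ [x, y] ++ u'') i = alphaH (u' ++ [y, x] ++ u'') i + 1 ∨
        alphaH (u' ++ [y, x] ++ u'') i = alphaH (u' ++ [x, y] ++ u'') i + 1) ∧
      ((i : ℝ), (alphaH (u' ++ [x, y] ++ u'') i : ℝ)) ∉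
        (convexHull ℝ (gammaA (u' ++ [x, y] ++ u''))).extremePoints ℝ ∧
      ((i : ℝ), (alphaH (u' ++ [y, x] ++ u'') i : ℝ)) ∉
        (convexHull ℝ (gammaA (u' ++ [x, y] ++ u''))).extremePoints ℝ := by
  cases x <;> cases y
  · exact absurd rfl hxy
  · -- x = false, y = true
    obtain ⟨i, h1, h2, h3, h4, h5, h6, h7, h8⟩ := main u' u'' hA.symm
    have hc : (u' ++ [false, true] ++ u'').count ltrA = (u' ++ [true, false] ++ u'').count ltrA := by
      simp [ltrA, List.count_append, List.count_cons]
    refine ⟨i, by omega, h2, by omega, fun k hk hki => (h4 k (by omega) hki).symm, h5.symm,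
      h6.symm, ?_, ?_⟩
    · rw [hA]; exact h8
    · rw [hA]; exact h7
  · -- x = true, y = false
    exact main u' u'' hA
  · exact absurd rfl hxy

/-- If `u ∼_2 v` where `v` is obtained from `u` by a single adjacent swap of
distinct letters, then the paths of `u` and `v` differ at exactly one lattice
point of each height, the differing heights differ by one, the index is interior,
and neither differing point is a vertex of the common `a`-height polygon. -/
theorem swap_not_vertex (u' u'' : List Bool) (x y : Bool) (hxy : x ≠ y)
    (hA : convexHull ℝ (gammaA (u' ++ [x, y] ++ u'')) =
      convexHull ℝ (gammaA (u' ++ [y, x] ++ u'')))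
    (hB : convexHull ℝ (gammaB (u' ++ [x, y] ++ u'')) =
      convexHull ℝ (gammaB (u' ++ [y, x] ++ u''))) :
    ∃ i : ℕ, i < (u' ++ [x, y] ++ u'').count ltrA ∧ 0 < i ∧
      i < (u' ++ [x, y] ++ u'').count ltrA - 1 ∧
      (∀ k < (u' ++ [x, y] ++ u'').count ltrA, k ≠ i →
        alphaH (u' ++ [x, y] ++ u'') k = alphaH (u' ++ [y, x] ++ u'') k) ∧
      alphaH (u' ++ [x, y] ++ u'') i ≠ alphaH (u' ++ [y, x] ++ u'') i ∧
      (alphaH (u' ++ [x, y] ++ u'') i = alphaH (u' ++ [y, x] ++ u'') i + 1 ∨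
        alphaH (u' ++ [y, x] ++ u'') i = alphaH (u' ++ [x, y] ++ u'') i + 1) ∧
      ((i : ℝ), (alphaH (u' ++ [x, y] ++ u'') i : ℝ)) ∉
        (convexHull ℝ (gammaA (u' ++ [x, y] ++ u''))).extremePoints ℝ ∧
      ((i : ℝ), (alphaH (u' ++ [y, x] ++ u'') i : ℝ)) ∉
        (convexHull ℝ (gammaA (u' ++ [x, y] ++ u''))).extremePoints ℝ := by
  exact swap_not_vertex' u' u'' x y hxy hA
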